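/- Let Γ be a group generated by a finite symmetric set S and Λ a group generated by a finite symmetric set T, each equipped with a sofic approximation whose approximating sets are connected as labelled graphs, and let (X, d_X) and (X′, d_{X′}) be the associated spaces of graphs with admissible metrics. If there is a bilipschitz equivalence f : X → X′, i.e. a bijection f and a constant C₀ ≥ 1 with (1/C₀)·d_X(x,y) ≤ d_{X′}(f(x), f(y)) ≤ C₀·d_X(x,y) for all x, y ∈ X, then Γ and Λ are bilipschitz equivalent: there exist a bijection F : Γ → Λ and a constant C ≥ 1 such that (1/C)·|g⁻¹h|_S ≤ |F(g)⁻¹F(h)|_T ≤ C·|g⁻¹h|_S for all g, h ∈ Γ. -/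

import Mathlib

open scoped BigOperators symmDiff Classical

universe u v

/-- A sofic approximation of a group `Γ` generated by a finite symmetric set `S`. -/
structure SoficApprox (Γ : Type u) [Group Γ] (S : Finset Γ) where
  F : ℕ → Finset Γ
  F_mono : Monotone F
  F_one : ∀ i, (1 : Γ) ∈ F i
  F_exhausts : ∀ g : Γ, ∃ i, g ∈ F i
  eps : ℕ → ℝ
  eps_pos : ∀ i, 0 < eps i
  eps_lim : Filter.Tendsto eps Filter.atTop (nhds 0)
  X : ℕ → Type
  finX : ∀ i, Finite (X i)
  neX : ∀ i, Nonempty (X i)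
  sigma : (i : ℕ) → Γ → Equiv.Perm (X i)
  Y : (i : ℕ) → Set (X i)
  Y_large : ∀ i, (1 - eps i) * (Nat.card (X i) : ℝ) ≤ ((Y i).ncard : ℝ)
  sigma_mul : ∀ i, ∀ g ∈ F i, ∀ h ∈ F i, ∀ y ∈ Y i, sigma i g (sigma i h y) = sigma i (g * h) y
  sigma_free : ∀ i, ∀ g ∈ F i, g ≠ 1 → ∀ y ∈ Y i, sigma i g y ≠ y

namespace SoficApprox

variable {Γ : Type u} [Group Γ] {S : Finset Γ}

/-- The total space (space of graphs) `X = ⨆ i, X i`. -/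
abbrev Total (A : SoficApprox Γ S) : Type := Σ i, A.X i

/-- The bijection `σ(g)` of the total space acting as `σ_i(g)` on each `X i`. -/
def perm (A : SoficApprox Γ S) (g : Γ) : Equiv.Perm A.Total :=
  Equiv.sigmaCongrRight fun i => A.sigma i g

/-- The continuous extension `σ̄(g)` of `σ(g)` to the Stone–Čech compactification. -/
def permBar (A : SoficApprox Γ S) (g : Γ) : Ultrafilter A.Total → Ultrafilter A.Total :=
  Ultrafilter.map (A.perm g)

/-- The union `Y = ⨆ i, Y i` inside the total space. -/
def Ytot (A : SoficApprox Γ S) : Set A.Total := {p | p.2 ∈ A.Y p.1}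

/-- `∂Y`: free ultrafilters containing `Y`. -/
def bdY (A : SoficApprox Γ S) : Set (Ultrafilter A.Total) :=
  {η | (∀ p : A.Total, η ≠ pure p) ∧ A.Ytot ∈ η}

/-- The core `Z = ⋂_{g ∈ Γ} σ̄(g)''(∂Y)` of the sofic boundary. -/
def core (A : SoficApprox Γ S) : Set (Ultrafilter A.Total) :=
  ⋂ g : Γ, A.permBar g '' A.bdY

/-- The `S`-labelled graph structure on `X i`, with edges `{x, σ_i(s)(x)}` for `s ∈ S`. -/
def graph (A : SoficApprox Γ S) (i : ℕ) : SimpleGraph (A.X i) where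
  Adj x y := x ≠ y ∧ ∃ s ∈ S, A.sigma i s x = y ∨ A.sigma i s y = x
  symm := ⟨fun x y h => ⟨h.1.symm, by obtain ⟨s, hs, h'⟩ := h.2; exact ⟨s, hs, h'.symm⟩⟩⟩
  loopless := ⟨fun x h => h.1 rfl⟩

/-- An admissible metric on the total space: a metric restricting to the edge-path
metric on each `X i` and with distances between distinct components tending to `∞`. -/
def Admissible (A : SoficApprox Γ S) (d : A.Total → A.Total → ℝ) : Prop :=
  (∀ p q, d p q = d q p) ∧
  (∀ p q r, d p r ≤ d p q + d q r) ∧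
  (∀ p q, d p q = 0 ↔ p = q) ∧
  (∀ p q, 0 ≤ d p q) ∧
  (∀ (i : ℕ) (x y : A.X i), d ⟨i, x⟩ ⟨i, y⟩ = ((A.graph i).dist x y : ℝ)) ∧
  (∀ R : ℝ, ∃ N : ℕ, ∀ i j : ℕ, i ≠ j → N ≤ i + j →
      ∀ (x : A.X i) (y : A.X j), R < d ⟨i, x⟩ ⟨j, y⟩)

/-- The entourage `E_R` viewed inside `βX × βX`. -/
def ER (A : SoficApprox Γ S) (d : A.Total → A.Total → ℝ) (R : ℝ) :
    Set (Ultrafilter A.Total × Ultrafilter A.Total) :=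
  {p | ∃ a b : A.Total, d a b ≤ R ∧ p = (pure a, pure b)}

end SoficApprox

/-- Word length of `g` with respect to the generating set `S`. -/
noncomputable def wordLength {Γ : Type u} [Group Γ] (S : Finset Γ) (g : Γ) : ℕ :=
  sInf {n | ∃ l : List Γ, (∀ x ∈ l, x ∈ S) ∧ l.length = n ∧ l.prod = g}

/-- Word length of an element of a free group. -/
noncomputable def fgLength {α : Type v} (w : FreeGroup α) : ℕ :=
  sInf {n | ∃ l : List (α × Bool), l.length = n ∧ FreeGroup.mk l = w}

/-- The canonical homomorphism `F_S → Γ` extending the inclusion `S ↪ Γ`. -/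
noncomputable def pihom {Γ : Type u} [Group Γ] (S : Finset Γ) : FreeGroup ↥S →* Γ :=
  FreeGroup.lift fun s => (s : Γ)

/-- The homomorphism `τ : F_S → Sym(X)` with `τ(s) = σ(s)` for `s ∈ S`. -/
noncomputable def SoficApprox.tau {Γ : Type u} [Group Γ] {S : Finset Γ}
    (A : SoficApprox Γ S) : FreeGroup ↥S →* Equiv.Perm A.Total :=
  FreeGroup.lift fun s => A.perm (s : Γ)

section Word

variable {Γ : Type u} [Group Γ] (S : Finset Γ)

lemma word_set_nonempty (hSsymm : ∀ s ∈ S, s⁻¹ ∈ S)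
    (hSgen : Subgroup.closure (S : Set Γ) = ⊤) (g : Γ) :
    {n | ∃ l : List Γ, (∀ x ∈ l, x ∈ S) ∧ l.length = n ∧ l.prod = g}.Nonempty := by
  have hg : g ∈ Subgroup.closure (S : Set Γ) := by rw [hSgen]; trivial
  refine Subgroup.closure_induction ?_ ?_ ?_ ?_ hg
  · rintro x hx
    exact ⟨1, [x], by simpa using hx, rfl, by simp⟩
  · exact ⟨0, [], by simp, rfl, rfl⟩
  · rintro x y - - ⟨m, l, hl, hlen, hprod⟩ ⟨m', l', hl', hlen', hprod'⟩
    exact ⟨m + m', l ++ l', by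
      intro z hz; rcases List.mem_append.1 hz with h | h
      exacts [hl z h, hl' z h], by simp [hlen, hlen'], by simp [hprod, hprod']⟩
  · rintro x - ⟨m, l, hl, hlen, hprod⟩
    refine ⟨m, (l.map (·⁻¹)).reverse, ?_, by simp [hlen], ?_⟩
    · intro z hz
      simp only [List.mem_reverse, List.mem_map] at hz
      obtain ⟨a, ha, rfl⟩ := hz
      exact hSsymm a (hl a ha)
    · rw [List.prod_reverse_noncomm, List.map_map]
      simp [hprod]

variable {S}

lemma wordLength_le_of_list (l : List Γ) (hl : ∀ x ∈ l, x ∈ S) :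
    wordLength S l.prod ≤ l.length :=
  Nat.sInf_le ⟨l, hl, rfl, rfl⟩

lemma wordLength_one : wordLength S (1 : Γ) = 0 :=
  Nat.le_zero.1 (by simpa using wordLength_le_of_list (S := S) [] (by simp))

lemma wordLength_mem_S {s : Γ} (hs : s ∈ S) : wordLength S s ≤ 1 := by
  simpa using wordLength_le_of_list (S := S) [s] (by simpa using hs)

/-- The ball of radius `n` as a `Finset`. -/
noncomputable def wordBall (S : Finset Γ) : ℕ → Finset Γ
  | 0 => {1}
  | n + 1 => wordBall S n ∪ (wordBall S n).image₂ (· * ·) S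

lemma list_prod_mem_wordBall {n : ℕ} (l : List Γ) (hl : ∀ x ∈ l, x ∈ S)
    (hlen : l.length ≤ n) : l.prod ∈ wordBall S n := by
  induction l using List.reverseRecOn generalizing n with
  | nil =>
    induction n with
    | zero => simp [wordBall]
    | succ n ihn =>
      simp only [wordBall, Finset.mem_union]
      exact Or.inl (ihn (by simp))
  | append_singleton l s ihl =>
    have hlen' : l.length + 1 ≤ n := by simpa using hlen
    obtain ⟨m, rfl⟩ : ∃ m, n = m + 1 := ⟨n - 1, by omega⟩
    simp only [wordBall, Finset.mem_union, Finset.mem_image₂]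
    refine Or.inr ⟨l.prod, ?_, s, hl s (by simp), by simp⟩
    exact ihl (fun z hz => hl z (by simp [hz])) (by omega)

variable (hSsymm : ∀ s ∈ S, s⁻¹ ∈ S) (hSgen : Subgroup.closure (S : Set Γ) = ⊤)
include hSsymm hSgen

lemma wordLength_exists (g : Γ) :
    ∃ l : List Γ, (∀ x ∈ l, x ∈ S) ∧ l.length = wordLength S g ∧ l.prod = g :=
  Nat.sInf_mem (word_set_nonempty S hSsymm hSgen g)

lemma eq_one_of_wordLength_eq_zero {g : Γ} (h : wordLength S g = 0) : g = 1 := by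
  obtain ⟨l, -, hlen, hprod⟩ := wordLength_exists hSsymm hSgen g
  rw [h, List.length_eq_zero_iff] at hlen
  simp [hlen] at hprod; exact hprod.symm

lemma wordLength_mul_le (g h : Γ) :
    wordLength S (g * h) ≤ wordLength S g + wordLength S h := by
  obtain ⟨l, hl, hlen, rfl⟩ := wordLength_exists hSsymm hSgen g
  obtain ⟨l', hl', hlen', rfl⟩ := wordLength_exists hSsymm hSgen h
  have := wordLength_le_of_list (S := S) (l ++ l') (by
    intro z hz; rcases List.mem_append.1 hz with h | h
    exacts [hl z h, hl' z h])
  simpa [hlen, hlen'] using this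

lemma wordLength_inv (g : Γ) : wordLength S g⁻¹ = wordLength S g := by
  have key : ∀ x : Γ, wordLength S x⁻¹ ≤ wordLength S x := by
    intro x
    obtain ⟨l, hl, hlen, rfl⟩ := wordLength_exists hSsymm hSgen x
    have hmem : ∀ z ∈ (l.map (·⁻¹)).reverse, z ∈ S := by
      intro z hz
      simp only [List.mem_reverse, List.mem_map] at hz
      obtain ⟨a, ha, rfl⟩ := hz
      exact hSsymm a (hl a ha)
    have := wordLength_le_of_list (S := S) (l.map (·⁻¹)).reverse hmem
    rw [List.prod_reverse_noncomm, List.map_map] at this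
    simpa [hlen] using this
  exact le_antisymm (key g) (by simpa using key g⁻¹)

lemma mem_wordBall {g : Γ} {n : ℕ} :
    g ∈ wordBall S n ↔ wordLength S g ≤ n := by
  constructor
  · intro hg
    induction n generalizing g with
    | zero =>
      simp only [wordBall, Finset.mem_singleton] at hg
      simp [hg, wordLength_one]
    | succ n ih =>
      simp only [wordBall, Finset.mem_union, Finset.mem_image₂] at hg
      rcases hg with hg | ⟨a, ha, s, hs, rfl⟩
      · exact le_trans (ih hg) (Nat.le_succ n)
      · calc wordLength S (a * s) ≤ wordLength S a + wordLength S s :=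
              wordLength_mul_le hSsymm hSgen a s
          _ ≤ n + 1 := add_le_add (ih ha) (wordLength_mem_S hs)
  · intro hg
    obtain ⟨l, hl, hlen, rfl⟩ := wordLength_exists hSsymm hSgen g
    exact list_prod_mem_wordBall l hl (by omega)

end Word

section Chart
variable {Γ : Type u} [Group Γ] {S : Finset Γ}

/-- The chart based at `y`: `g ↦ σ_i(g⁻¹) y`. -/
noncomputable def schart (A : SoficApprox Γ S) (i : ℕ) (y : A.X i) (g : Γ) : A.X i :=
  A.sigma i g⁻¹ y

variable (hSsymm : ∀ s ∈ S, s⁻¹ ∈ S) (hSgen : Subgroup.closure (S : Set Γ) = ⊤)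
variable (A : SoficApprox Γ S) {i : ℕ} {y : A.X i} (hy : y ∈ A.Y i)
include hy

lemma sigma_one_fix : A.sigma i 1 y = y := by
  have h := A.sigma_mul i 1 (A.F_one i) 1 (A.F_one i) y hy
  rw [one_mul] at h
  exact (A.sigma i 1).injective h

lemma schart_one : schart A i y 1 = y := by
  rw [schart, inv_one, sigma_one_fix A hy]

lemma sigma_schart {u v : Γ} (hu : u ∈ A.F i) (hv : v⁻¹ ∈ A.F i) :
    A.sigma i u (schart A i y v) = schart A i y (v * u⁻¹) := by
  rw [schart, schart, A.sigma_mul i u hu v⁻¹ hv y hy]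
  congr 1
  group

lemma schart_inj {g h : Γ} (hg : g ∈ A.F i) (hg' : g⁻¹ ∈ A.F i) (hh' : h⁻¹ ∈ A.F i)
    (hgh : g * h⁻¹ ∈ A.F i) (heq : schart A i y g = schart A i y h) : g = h := by
  have h1 : A.sigma i g (schart A i y g) = y := by
    rw [sigma_schart A hy hg hg', mul_inv_cancel, schart_one A hy]
  have h2 : A.sigma i g (schart A i y h) = schart A i y (h * g⁻¹) :=
    sigma_schart A hy hg hh'
  rw [heq, h2] at h1
  by_contra hne
  have hne' : g * h⁻¹ ≠ 1 := by
    intro hc; exact hne (by rw [← mul_inv_eq_one]; exact hc)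
  refine A.sigma_free i (g * h⁻¹) hgh hne' y hy ?_
  rw [show g * h⁻¹ = (h * g⁻¹)⁻¹ by group]
  exact h1

lemma schart_adj {v s : Γ} (hs : s ∈ S) (hsF : s ∈ A.F i) (hvs : (v * s)⁻¹ ∈ A.F i)
    (hne : schart A i y v ≠ schart A i y (v * s)) :
    (A.graph i).Adj (schart A i y v) (schart A i y (v * s)) := by
  refine ⟨hne, s, hs, Or.inr ?_⟩
  rw [sigma_schart A hy hsF hvs]
  congr 1
  group

include hSsymm hSgen

lemma schart_walk_exists {M : ℕ} (hF : ∀ g : Γ, wordLength S g ≤ M → g ∈ A.F i)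
    (v u : Γ) (hM : wordLength S v + wordLength S u + 1 ≤ M) :
    ∃ p : (A.graph i).Walk (schart A i y v) (schart A i y (v * u)),
      p.length ≤ wordLength S u := by
  have key : ∀ l : List Γ, (∀ x ∈ l, x ∈ S) → ∀ v : Γ,
      wordLength S v + l.length + 1 ≤ M →
      ∃ p : (A.graph i).Walk (schart A i y v) (schart A i y (v * l.prod)),
        p.length ≤ l.length := by
    intro l
    induction l with
    | nil =>
      intro _ v _
      exact ⟨SimpleGraph.Walk.nil.copy rfl (congrArg _ (by simp)), by rw [SimpleGraph.Walk.length_copy]; simp⟩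
    | cons s l' ih =>
      intro hl v hMv
      have hsS : s ∈ S := hl s (by simp)
      have hwv : wordLength S (v * s) ≤ wordLength S v + 1 :=
        le_trans (wordLength_mul_le hSsymm hSgen v s)
          (by have := wordLength_mem_S (S := S) hsS; omega)
      obtain ⟨q, hq⟩ := ih (fun z hz => hl z (by simp [hz])) (v * s)
        (by simp only [List.length_cons] at hMv; omega)
      have hassoc : v * s * l'.prod = v * (s :: l').prod := by
        simp [mul_assoc]
      by_cases heq : schart A i y v = schart A i y (v * s)
      · refine ⟨q.copy heq.symm (congrArg _ hassoc), ?_⟩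
        simp only [SimpleGraph.Walk.length_copy, List.length_cons]
        omega
      · have hws : wordLength S (v * s) + 1 ≤ M := by
          simp only [List.length_cons] at hMv; omega
        have hadj := schart_adj A hy hsS
          (hF s (le_trans (wordLength_mem_S hsS) (by omega)))
          (hF (v * s)⁻¹ (by rw [wordLength_inv hSsymm hSgen]; omega))
          heq
        refine ⟨(SimpleGraph.Walk.cons hadj q).copy rfl (congrArg _ hassoc), ?_⟩
        simp only [SimpleGraph.Walk.length_copy, SimpleGraph.Walk.length_cons,
          List.length_cons]
        omega
  obtain ⟨l, hl, hlen, rfl⟩ := wordLength_exists hSsymm hSgen u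
  obtain ⟨p, hp⟩ := key l hl v (by omega)
  exact ⟨p, by omega⟩

lemma schart_dist_le {M : ℕ} (hF : ∀ g : Γ, wordLength S g ≤ M → g ∈ A.F i)
    (v u : Γ) (hM : wordLength S v + wordLength S u + 1 ≤ M) :
    (A.graph i).dist (schart A i y v) (schart A i y (v * u)) ≤ wordLength S u := by
  obtain ⟨p, hp⟩ := schart_walk_exists hSsymm hSgen A hy hF v u hM
  exact le_trans (SimpleGraph.dist_le p) hp

lemma schart_walk_rev {M : ℕ} (hF : ∀ g : Γ, wordLength S g ≤ M → g ∈ A.F i)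
    {a x : A.X i} (p : (A.graph i).Walk a x) (v : Γ) (ha : a = schart A i y v)
    (hM : wordLength S v + p.length + 1 ≤ M) :
    ∃ u : Γ, wordLength S u ≤ p.length ∧ x = schart A i y (v * u) := by
  induction p generalizing v with
  | nil => exact ⟨1, by simp [wordLength_one], by simpa [ha]⟩
  | @cons a b x hadj q ih =>
    subst ha
    obtain ⟨hne, t, htS, hcase⟩ := id hadj
    have htF : t ∈ A.F i := hF t (le_trans (wordLength_mem_S htS) (by omega))
    have hvF : v⁻¹ ∈ A.F i := by
      refine hF v⁻¹ ?_
      rw [wordLength_inv hSsymm hSgen]; simp only [SimpleGraph.Walk.length_cons] at hM; omega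
    have hwt : wordLength S t ≤ 1 := wordLength_mem_S htS
    have hwt' : wordLength S t⁻¹ ≤ 1 := by rw [wordLength_inv hSsymm hSgen]; exact hwt
    simp only [SimpleGraph.Walk.length_cons] at hM ⊢
    have hb : ∃ w : Γ, wordLength S w ≤ 1 ∧ b = schart A i y (v * w) := by
      rcases hcase with hc | hc
      · refine ⟨t⁻¹, hwt', ?_⟩
        rw [← hc, sigma_schart A hy htF hvF]
      · refine ⟨t, hwt, ?_⟩
        have hvtF : (v * t)⁻¹ ∈ A.F i := by
          refine hF (v * t)⁻¹ ?_
          rw [wordLength_inv hSsymm hSgen]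
          exact le_trans (wordLength_mul_le hSsymm hSgen v t) (by omega)
        have : A.sigma i t (schart A i y (v * t)) = schart A i y v := by
          rw [sigma_schart A hy htF hvtF]
          congr 1; group
        exact (A.sigma i t).injective (hc.trans this.symm)
    obtain ⟨w, hw, rfl⟩ := hb
    have hwv : wordLength S (v * w) ≤ wordLength S v + 1 :=
      le_trans (wordLength_mul_le hSsymm hSgen v w) (by omega)
    obtain ⟨u', hu', rfl⟩ := ih (v * w) rfl (by omega)
    refine ⟨w * u', ?_, by rw [mul_assoc]⟩
    exact le_trans (wordLength_mul_le hSsymm hSgen w u') (by omega)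

lemma schart_dist_eq {M : ℕ} (hconn : (A.graph i).Connected)
    (hF : ∀ g : Γ, wordLength S g ≤ M → g ∈ A.F i)
    (v u : Γ) (hM : 2 * (wordLength S v + wordLength S u) + 2 ≤ M) :
    (A.graph i).dist (schart A i y v) (schart A i y (v * u)) = wordLength S u := by
  have hub := schart_dist_le hSsymm hSgen A hy hF v u (by omega)
  refine le_antisymm hub ?_
  obtain ⟨p, hp⟩ := (hconn (schart A i y v) (schart A i y (v * u))).exists_walk_length_eq_dist
  obtain ⟨u', hu', heq⟩ := schart_walk_rev hSsymm hSgen A hy hF p v rfl (by omega)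
  have hwu' : wordLength S u' ≤ wordLength S u := by
    rw [hp] at hu'; exact le_trans hu' hub
  have hF1 : v * u ∈ A.F i := hF _ (le_trans (wordLength_mul_le hSsymm hSgen v u) (by omega))
  have hF2 : (v * u)⁻¹ ∈ A.F i := by
    refine hF _ ?_
    rw [wordLength_inv hSsymm hSgen]
    exact le_trans (wordLength_mul_le hSsymm hSgen v u) (by omega)
  have hF3 : (v * u')⁻¹ ∈ A.F i := by
    refine hF _ ?_
    rw [wordLength_inv hSsymm hSgen]
    exact le_trans (wordLength_mul_le hSsymm hSgen v u') (by omega)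
  have hF4 : (v * u) * (v * u')⁻¹ ∈ A.F i := by
    refine hF _ (le_trans (wordLength_mul_le hSsymm hSgen _ _) ?_)
    have h1 : wordLength S (v * u) ≤ wordLength S v + wordLength S u :=
      wordLength_mul_le hSsymm hSgen v u
    have h2 : wordLength S (v * u')⁻¹ ≤ wordLength S v + wordLength S u := by
      rw [wordLength_inv hSsymm hSgen]
      exact le_trans (wordLength_mul_le hSsymm hSgen v u') (by omega)
    omega
  have huu' : u = u' := mul_left_cancel (schart_inj A hy hF1 hF2 hF3 hF4 heq)
  calc wordLength S u = wordLength S u' := by rw [huu']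
    _ ≤ p.length := hu'
    _ = _ := hp

end Chart

section Comp

lemma sigma_fst_eq {β : ℕ → Type} (p : Σ i, β i) (j : ℕ) (h : p.fst = j) :
    ∃ b : β j, p = ⟨j, b⟩ := by
  cases p with
  | mk a b =>
    cases h
    exact ⟨b, rfl⟩

variable {Γ : Type u} [Group Γ] {S : Finset Γ} {Λ : Type u} [Group Λ] {T : Finset Λ}
variable (A : SoficApprox Γ S) (B : SoficApprox Λ T)
variable (φ : A.Total → B.Total)

lemma comp_bounded_finite (hφinj : Function.Injective φ) (J : ℕ) :
    {i : ℕ | ∃ x : A.X i, (φ ⟨i, x⟩).1 ≤ J}.Finite := by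
  haveI : ∀ j : Fin (J + 1), Finite (B.X j) := fun j => B.finX j
  have hfin : Finite {p : B.Total // p.1 ≤ J} := by
    refine Finite.of_injective
      (fun p => (⟨⟨p.1.1, Nat.lt_succ_of_le p.2⟩, p.1.2⟩ : Σ j : Fin (J + 1), B.X j)) ?_
    rintro ⟨⟨a, x⟩, ha⟩ ⟨⟨b, z⟩, hb⟩ h
    simp only [Sigma.mk.inj_iff, Fin.mk.injEq] at h
    obtain ⟨rfl, h2⟩ := h
    cases eq_of_heq h2
    rfl
  rw [← Set.finite_coe_iff]
  refine Finite.of_injective (fun i =>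
    (⟨φ ⟨i.1, Classical.choose i.2⟩, Classical.choose_spec i.2⟩ : {p : B.Total // p.1 ≤ J})) ?_
  rintro ⟨i, hi⟩ ⟨i', hi'⟩ h
  simp only [Subtype.mk.injEq] at h
  have := congrArg Sigma.fst (hφinj h)
  simpa using this

variable (dX : A.Total → A.Total → ℝ) (dX' : B.Total → B.Total → ℝ)
variable (C : ℝ)

lemma comp_confine (hdX : A.Admissible dX) (hdX' : B.Admissible dX')
    (hconnA : ∀ i, (A.graph i).Connected) (hC : 0 ≤ C)
    (hlip : ∀ p q : A.Total, dX' (φ p) (φ q) ≤ C * dX p q)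
    (N : ℕ)
    (hN : ∀ j j' : ℕ, j ≠ j' → N ≤ j + j' →
      ∀ (x : B.X j) (z : B.X j'), C < dX' ⟨j, x⟩ ⟨j', z⟩)
    (i : ℕ) (x z : A.X i) (hx : N ≤ (φ ⟨i, x⟩).1) :
    (φ ⟨i, z⟩).1 = (φ ⟨i, x⟩).1 := by
  obtain ⟨p⟩ := (hconnA i) x z
  revert hx
  induction p with
  | nil => intro _; rfl
  | @cons a b c hadj q ih =>
    intro hx
    have hstep : (φ ⟨i, b⟩).1 = (φ ⟨i, a⟩).1 := by
      by_contra hne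
      have hd1 : (A.graph i).dist a b ≤ 1 := by
        simpa using SimpleGraph.dist_le (SimpleGraph.Walk.cons hadj SimpleGraph.Walk.nil)
      have hdle : dX ⟨i, a⟩ ⟨i, b⟩ ≤ 1 := by
        rw [hdX.2.2.2.2.1 i a b]
        exact_mod_cast hd1
      have hlt : dX' (φ ⟨i, a⟩) (φ ⟨i, b⟩) ≤ C :=
        le_trans (hlip _ _) (by nlinarith [hdX.2.2.2.1 ⟨i, a⟩ (⟨i, b⟩ : A.Total)])
      obtain ⟨xa, hxa⟩ := sigma_fst_eq (φ ⟨i, a⟩) _ rfl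
      obtain ⟨xb, hxb⟩ := sigma_fst_eq (φ ⟨i, b⟩) _ rfl
      have := hN (φ ⟨i, a⟩).1 (φ ⟨i, b⟩).1 (fun hc => hne hc.symm)
        (le_trans hx (by omega)) xa xb
      rw [← hxa, ← hxb] at this
      exact absurd hlt (not_le.2 this)
    rw [ih (hstep ▸ hx), hstep]

end Comp

section Match
variable {Γ : Type u} [Group Γ] {S : Finset Γ} {Λ : Type u} [Group Λ] {T : Finset Λ}
variable (A : SoficApprox Γ S) (B : SoficApprox Λ T)

lemma match_components
    (hconnA : ∀ i, (A.graph i).Connected) (hconnB : ∀ i, (B.graph i).Connected)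
    (dX : A.Total → A.Total → ℝ) (hdX : A.Admissible dX)
    (dX' : B.Total → B.Total → ℝ) (hdX' : B.Admissible dX')
    (f : A.Total → B.Total) (hfbij : Function.Bijective f)
    (C₀ : ℝ) (hC₀ : 1 ≤ C₀)
    (hbilip : ∀ p q : A.Total,
      (1 / C₀) * dX p q ≤ dX' (f p) (f q) ∧ dX' (f p) (f q) ≤ C₀ * dX p q) :
    ∃ Ibad : Set ℕ, Ibad.Finite ∧ ∀ i ∉ Ibad, ∃ j : ℕ,
      (∀ x : A.X i, (f ⟨i, x⟩).1 = j) ∧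
      (∀ x' : B.X j, ∃ x : A.X i, f ⟨i, x⟩ = ⟨j, x'⟩) := by
  haveI : ∀ i, Nonempty (A.X i) := A.neX
  have hC₀pos : (0 : ℝ) < C₀ := lt_of_lt_of_le one_pos hC₀
  set e := Equiv.ofBijective f hfbij with he
  have hef : ∀ p, e p = f p := fun p => rfl
  have hlipf : ∀ p q, dX' (f p) (f q) ≤ C₀ * dX p q := fun p q => (hbilip p q).2
  have hlipg : ∀ p' q', dX (e.symm p') (e.symm q') ≤ C₀ * dX' p' q' := by
    intro p' q'
    have h := (hbilip (e.symm p') (e.symm q')).1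
    rw [show f (e.symm p') = p' from e.apply_symm_apply p',
      show f (e.symm q') = q' from e.apply_symm_apply q'] at h
    rw [div_mul_eq_mul_div, one_mul, div_le_iff₀ hC₀pos] at h
    linarith [h]
  obtain ⟨N, hN⟩ := hdX'.2.2.2.2.2 C₀
  obtain ⟨N', hN'⟩ := hdX.2.2.2.2.2 C₀
  -- the set of indices whose image stays low
  have hLowA : {i : ℕ | ∃ x : A.X i, (f ⟨i, x⟩).1 ≤ N}.Finite :=
    comp_bounded_finite A B f hfbij.1 N
  have hLowB : {j : ℕ | ∃ x' : B.X j, (e.symm ⟨j, x'⟩).1 ≤ N'}.Finite := by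
    haveI : ∀ j, Nonempty (B.X j) := B.neX
    exact comp_bounded_finite B A e.symm e.symm.injective N'
  obtain ⟨Jb, hJb⟩ := hLowB.bddAbove
  have hI2 : {i : ℕ | ∃ x : A.X i, (f ⟨i, x⟩).1 ≤ Jb + N}.Finite :=
    comp_bounded_finite A B f hfbij.1 (Jb + N)
  refine ⟨_, hLowA.union hI2, ?_⟩
  intro i hi
  rw [Set.mem_union] at hi
  push_neg at hi
  obtain ⟨hi1, hi2⟩ := hi
  simp only [Set.mem_setOf_eq, not_exists, not_le] at hi1 hi2
  obtain ⟨x₀⟩ := A.neX i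
  set j := (f ⟨i, x₀⟩).1 with hj
  have hconst : ∀ x : A.X i, (f ⟨i, x⟩).1 = j :=
    fun x => comp_confine A B f dX dX' C₀ hdX hdX' hconnA (le_of_lt hC₀pos)
      hlipf N hN i x₀ x (le_of_lt (hi1 x₀))
  refine ⟨j, hconst, ?_⟩
  -- j is not in the low set for the inverse map
  have hjhigh : Jb + N < j := hi2 x₀
  have hjLowB : j ∉ {j : ℕ | ∃ x' : B.X j, (e.symm ⟨j, x'⟩).1 ≤ N'} := by
    intro hmem
    have := hJb hmem
    omega
  simp only [Set.mem_setOf_eq, not_exists, not_le] at hjLowB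
  obtain ⟨xb, hxb⟩ := sigma_fst_eq (f ⟨i, x₀⟩) j hj.symm
  have hsymmconst : ∀ x' : B.X j, (e.symm ⟨j, x'⟩).1 = i := by
    intro x'
    have h1 : (e.symm ⟨j, xb⟩).1 = i := by
      rw [← hxb, ← hef, e.symm_apply_apply]
    have h2 := comp_confine B A e.symm dX' dX C₀ hdX' hdX hconnB (le_of_lt hC₀pos)
      hlipg N' hN' j xb x' (le_of_lt (hjLowB xb))
    rw [h2, h1]
  intro x'
  obtain ⟨z, hz⟩ := sigma_fst_eq (e.symm ⟨j, x'⟩) i (hsymmconst x')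
  refine ⟨z, ?_⟩
  rw [← hz, ← hef, e.apply_symm_apply]

end Match

section Key
variable {Γ : Type u} [Group Γ] {S : Finset Γ} {Λ : Type u} [Group Λ] {T : Finset Λ}

lemma F_eventually (hSsymm : ∀ s ∈ S, s⁻¹ ∈ S) (hSgen : Subgroup.closure (S : Set Γ) = ⊤)
    (A : SoficApprox Γ S) (M : ℕ) :
    ∃ I : ℕ, ∀ i ≥ I, (∀ g : Γ, wordLength S g ≤ M → g ∈ A.F i) ∧ A.eps i < 1 / 2 := by
  classical
  have hhalf : ∀ᶠ i in Filter.atTop, A.eps i < 1 / 2 :=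
    A.eps_lim.eventually_lt_const (by norm_num)
  obtain ⟨I₂, hI₂⟩ := Filter.eventually_atTop.1 hhalf
  have hex : ∀ g : Γ, ∃ k, g ∈ A.F k := A.F_exhausts
  refine ⟨max ((wordBall S M).sup fun g => Classical.choose (hex g)) I₂,
    fun i hi => ⟨?_, hI₂ i (le_trans (le_max_right _ _) hi)⟩⟩
  intro g hg
  have hgball : g ∈ wordBall S M := (mem_wordBall hSsymm hSgen).2 hg
  have h1 : Classical.choose (hex g) ≤ i := by
    have h2 : Classical.choose (hex g) ≤ (wordBall S M).sup fun g => Classical.choose (hex g) :=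
      Finset.le_sup (f := fun g => Classical.choose (hex g)) hgball
    exact le_trans (le_trans h2 (le_max_left _ I₂)) hi
  exact A.F_mono h1 (Classical.choose_spec (hex g))

lemma key_approx
    (hSsymm : ∀ s ∈ S, s⁻¹ ∈ S) (hSgen : Subgroup.closure (S : Set Γ) = ⊤)
    (hTsymm : ∀ t ∈ T, t⁻¹ ∈ T) (hTgen : Subgroup.closure (T : Set Λ) = ⊤)
    (A : SoficApprox Γ S) (B : SoficApprox Λ T)
    (hconnA : ∀ i, (A.graph i).Connected) (hconnB : ∀ i, (B.graph i).Connected)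
    (dX : A.Total → A.Total → ℝ) (hdX : A.Admissible dX)
    (dX' : B.Total → B.Total → ℝ) (hdX' : B.Admissible dX')
    (f : A.Total → B.Total) (hfbij : Function.Bijective f)
    (C₀ : ℝ) (hC₀ : 1 ≤ C₀)
    (hbilip : ∀ p q : A.Total,
      (1 / C₀) * dX p q ≤ dX' (f p) (f q) ∧ dX' (f p) (f q) ≤ C₀ * dX p q)
    (r : ℕ) :
    ∃ q : Γ → Λ, q 1 = 1 ∧
      (∀ g h : Γ, wordLength S g ≤ r → wordLength S h ≤ r →
        (wordLength S (g⁻¹ * h) : ℝ) ≤ C₀ * (wordLength T ((q g)⁻¹ * q h) : ℝ) ∧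
        (wordLength T ((q g)⁻¹ * q h) : ℝ) ≤ C₀ * (wordLength S (g⁻¹ * h) : ℝ)) ∧
      (∀ lam : Λ, C₀ * (wordLength T lam : ℝ) ≤ (r : ℝ) →
        ∃ g : Γ, wordLength S g ≤ r ∧ q g = lam) := by
  classical
  have hC₀pos : (0 : ℝ) < C₀ := lt_of_lt_of_le one_pos hC₀
  set c : ℕ := ⌈C₀⌉₊ with hc
  have hCc : C₀ ≤ (c : ℝ) := Nat.le_ceil C₀
  have hc1 : 1 ≤ c := by
    rw [hc]
    exact Nat.one_le_ceil_iff.2 hC₀pos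
  set MA : ℕ := 6 * r + 6 with hMA
  set MB : ℕ := 6 * (c * r) + 6 with hMB
  -- choose a good pair of components
  obtain ⟨Ibad, hIbadfin, hmatch⟩ := match_components A B hconnA hconnB dX hdX dX' hdX'
    f hfbij C₀ hC₀ hbilip
  obtain ⟨IA, hIA⟩ := F_eventually hSsymm hSgen A MA
  obtain ⟨JB, hJB⟩ := F_eventually hTsymm hTgen B MB
  have hjfin : {i : ℕ | ∃ x : A.X i, (f ⟨i, x⟩).1 ≤ JB}.Finite :=
    comp_bounded_finite A B f hfbij.1 JB
  obtain ⟨K, hK⟩ := (hIbadfin.union hjfin).bddAbove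
  set i : ℕ := max IA (K + 1) with hidef
  have hinotin : i ∉ Ibad ∪ {i : ℕ | ∃ x : A.X i, (f ⟨i, x⟩).1 ≤ JB} := by
    intro hmem
    have := hK hmem
    have : i ≤ K := this
    have : K + 1 ≤ i := le_max_right _ _
    omega
  have hiIbad : i ∉ Ibad := fun h => hinotin (Set.mem_union_left _ h)
  obtain ⟨j, hconst, hsurj⟩ := hmatch i hiIbad
  have hFA : ∀ g : Γ, wordLength S g ≤ MA → g ∈ A.F i :=
    (hIA i (le_max_left _ _)).1
  have hepsA : A.eps i < 1 / 2 := (hIA i (le_max_left _ _)).2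
  have hjJB : JB < j := by
    by_contra hle
    push_neg at hle
    obtain ⟨x₀⟩ := A.neX i
    exact hinotin (Set.mem_union_right _ ⟨x₀, (hconst x₀).symm ▸ hle⟩)
  have hFB : ∀ lam : Λ, wordLength T lam ≤ MB → lam ∈ B.F j :=
    (hJB j (le_of_lt hjJB)).1
  have hepsB : B.eps j < 1 / 2 := (hJB j (le_of_lt hjJB)).2
  -- the induced bijection on the components
  have he' : ∀ x : A.X i, ∃ b : B.X j, f ⟨i, x⟩ = ⟨j, b⟩ :=
    fun x => sigma_fst_eq (f ⟨i, x⟩) j (hconst x)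
  set e' : A.X i → B.X j := fun x => Classical.choose (he' x) with he'def
  have he'spec : ∀ x : A.X i, f ⟨i, x⟩ = ⟨j, e' x⟩ := fun x => Classical.choose_spec (he' x)
  have he'inj : Function.Injective e' := by
    intro a b hab
    have : f ⟨i, a⟩ = f ⟨i, b⟩ := by rw [he'spec a, he'spec b, hab]
    have h2 := hfbij.1 this
    exact eq_of_heq (Sigma.mk.inj_iff.1 h2).2
  have he'surj : Function.Surjective e' := by
    intro x'
    obtain ⟨x, hx⟩ := hsurj x'
    refine ⟨x, ?_⟩
    have h2 := (he'spec x).symm.trans hx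
    exact eq_of_heq (Sigma.mk.inj_iff.1 h2).2
  haveI hfinA : Finite (A.X i) := A.finX i
  haveI hfinB : Finite (B.X j) := B.finX j
  haveI hneA : Nonempty (A.X i) := A.neX i
  have hcard : Nat.card (A.X i) = Nat.card (B.X j) :=
    Nat.card_eq_of_bijective e' ⟨he'inj, he'surj⟩
  have hnpos : 0 < Nat.card (A.X i) := Nat.card_pos
  -- find a base point in Y whose image lies in Y'
  have hbase : ∃ y : A.X i, y ∈ A.Y i ∧ e' y ∈ B.Y j := by
    by_contra hno
    push_neg at hno
    have himg : e' '' (A.Y i) ⊆ (B.Y j)ᶜ := by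
      rintro _ ⟨y, hy, rfl⟩
      exact hno y hy
    have h1 : (A.Y i).ncard ≤ ((B.Y j)ᶜ).ncard := by
      rw [← Set.ncard_image_of_injective (A.Y i) he'inj]
      exact Set.ncard_le_ncard himg (Set.toFinite _)
    have h2 : ((B.Y j)ᶜ).ncard = Nat.card (B.X j) - (B.Y j).ncard := by
      have := Set.ncard_add_ncard_compl (B.Y j)
      omega
    have hYA := A.Y_large i
    have hYB := B.Y_large j
    have hYBcard : (B.Y j).ncard ≤ Nat.card (B.X j) :=
      le_trans (Set.ncard_le_ncard (Set.subset_univ _) (Set.toFinite _)) (by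
        rw [Set.ncard_univ])
    have hcast : ((((B.Y j)ᶜ).ncard : ℝ)) = (Nat.card (B.X j) : ℝ) - ((B.Y j).ncard : ℝ) := by
      rw [h2]
      push_cast [Nat.cast_sub hYBcard]
      ring
    have h1' : ((A.Y i).ncard : ℝ) ≤ (((B.Y j)ᶜ).ncard : ℝ) := by exact_mod_cast h1
    rw [hcast] at h1'
    have hn : (0 : ℝ) < (Nat.card (A.X i) : ℝ) := by exact_mod_cast hnpos
    rw [← hcard] at h1' hYB
    nlinarith [hYA, hYB, h1', hepsA, hepsB, hn]
  obtain ⟨y, hy, hy'⟩ := hbase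
  set y' : B.X j := e' y with hy'def
  -- distances are preserved exactly by the charts
  have hdistA : ∀ g h : Γ, wordLength S g ≤ r → wordLength S h ≤ r →
      ((A.graph i).dist (schart A i y g) (schart A i y h) : ℕ) = wordLength S (g⁻¹ * h) := by
    intro g h hg hh
    have hu : wordLength S (g⁻¹ * h) ≤ 2 * r := by
      have := wordLength_mul_le hSsymm hSgen g⁻¹ h
      rw [wordLength_inv hSsymm hSgen] at this
      omega
    have := schart_dist_eq hSsymm hSgen A hy (hconnA i) hFA g (g⁻¹ * h) (by omega)
    rw [mul_inv_cancel_left] at this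
    exact this
  -- transfer distances through f
  have hdistf : ∀ x z : A.X i,
      ((B.graph j).dist (e' x) (e' z) : ℝ) ≤ C₀ * ((A.graph i).dist x z : ℝ) ∧
      ((A.graph i).dist x z : ℝ) ≤ C₀ * ((B.graph j).dist (e' x) (e' z) : ℝ) := by
    intro x z
    have h5A := hdX.2.2.2.2.1 i x z
    have h5B := hdX'.2.2.2.2.1 j (e' x) (e' z)
    have hb := hbilip ⟨i, x⟩ ⟨i, z⟩
    rw [he'spec x, he'spec z] at hb
    constructor
    · rw [← h5A, ← h5B]
      exact hb.2
    · rw [← h5A, ← h5B]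
      have h1 := hb.1
      rw [div_mul_eq_mul_div, one_mul, div_le_iff₀ hC₀pos] at h1
      linarith
  -- existence of chart readings
  have hqex : ∀ g : Γ, wordLength S g ≤ r →
      ∃ lam : Λ, wordLength T lam ≤ c * r ∧
        e' (schart A i y g) = schart B j y' lam := by
    intro g hg
    have h0 : (A.graph i).dist y (schart A i y g) = wordLength S g := by
      have := hdistA 1 g (by simp [wordLength_one]) hg
      rw [inv_one, one_mul] at this
      rw [← this, schart_one A hy]
    have hdy : (B.graph j).dist y' (e' (schart A i y g)) ≤ c * r := by
      have h1 := (hdistf y (schart A i y g)).1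
      rw [h0] at h1
      have h2 : (wordLength S g : ℝ) ≤ (r : ℝ) := by exact_mod_cast hg
      have h3 : ((B.graph j).dist (e' y) (e' (schart A i y g)) : ℝ) ≤ ((c * r : ℕ) : ℝ) := by
        push_cast
        calc ((B.graph j).dist (e' y) (e' (schart A i y g)) : ℝ)
            ≤ C₀ * (wordLength S g : ℝ) := h1
          _ ≤ C₀ * r := by nlinarith
          _ ≤ (c : ℝ) * r := mul_le_mul_of_nonneg_right hCc (Nat.cast_nonneg r)
      rw [← hy'def] at h3
      exact_mod_cast h3
    obtain ⟨p, hp⟩ := (hconnB j y' (e' (schart A i y g))).exists_walk_length_eq_dist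
    obtain ⟨u, hu, hxu⟩ := schart_walk_rev hTsymm hTgen B hy' hFB p 1
      (schart_one B hy').symm
      (by rw [wordLength_one, hp]; omega)
    rw [one_mul] at hxu
    exact ⟨u, by rw [hp] at hu; omega, hxu⟩
  set q : Γ → Λ := fun g =>
    if hg : wordLength S g ≤ r then Classical.choose (hqex g hg) else 1 with hqdef
  have hqspec : ∀ g : Γ, ∀ hg : wordLength S g ≤ r,
      wordLength T (q g) ≤ c * r ∧ e' (schart A i y g) = schart B j y' (q g) := by
    intro g hg
    have : q g = Classical.choose (hqex g hg) := by rw [hqdef]; exact dif_pos hg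
    rw [this]
    exact Classical.choose_spec (hqex g hg)
  -- injectivity of the B-side chart
  have hinjB : ∀ lam mu : Λ, wordLength T lam ≤ c * r → wordLength T mu ≤ c * r →
      schart B j y' lam = schart B j y' mu → lam = mu := by
    intro lam mu h1 h2 heq
    have hmul : wordLength T (lam * mu⁻¹) ≤ 2 * (c * r) := by
      have := wordLength_mul_le hTsymm hTgen lam mu⁻¹
      rw [wordLength_inv hTsymm hTgen] at this
      omega
    exact schart_inj B hy' (hFB lam (by omega))
      (hFB lam⁻¹ (by rw [wordLength_inv hTsymm hTgen]; omega))
      (hFB mu⁻¹ (by rw [wordLength_inv hTsymm hTgen]; omega))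
      (hFB (lam * mu⁻¹) (by omega)) heq
  have hr0 : wordLength S (1 : Γ) ≤ r := by rw [wordLength_one]; omega
  have hq1 : q 1 = 1 := by
    obtain ⟨hb, hspec⟩ := hqspec 1 hr0
    rw [schart_one A hy, ← hy'def] at hspec
    refine hinjB (q 1) 1 hb (by rw [wordLength_one]; omega) ?_
    rw [← hspec, schart_one B hy']
  -- B-side chart distances
  have hdistB : ∀ lam mu : Λ, wordLength T lam ≤ c * r → wordLength T mu ≤ c * r →
      (B.graph j).dist (schart B j y' lam) (schart B j y' mu) =
        wordLength T (lam⁻¹ * mu) := by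
    intro lam mu h1 h2
    have hu : wordLength T (lam⁻¹ * mu) ≤ 2 * (c * r) := by
      have := wordLength_mul_le hTsymm hTgen lam⁻¹ mu
      rw [wordLength_inv hTsymm hTgen] at this
      omega
    have := schart_dist_eq hTsymm hTgen B hy' (hconnB j) hFB lam (lam⁻¹ * mu) (by omega)
    rw [mul_inv_cancel_left] at this
    exact this
  refine ⟨q, hq1, ?_, ?_⟩
  · intro g h hg hh
    obtain ⟨hbg, hsg⟩ := hqspec g hg
    obtain ⟨hbh, hsh⟩ := hqspec h hh
    have hDB := hdistB (q g) (q h) hbg hbh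
    have hDA := hdistA g h hg hh
    have htr := hdistf (schart A i y g) (schart A i y h)
    rw [hsg, hsh, hDB, hDA] at htr
    exact ⟨htr.2, htr.1⟩
  · intro lam hlam
    have hlamr : wordLength T lam ≤ r := by
      have h1 : (wordLength T lam : ℝ) ≤ C₀ * (wordLength T lam : ℝ) := by
        nlinarith [Nat.cast_nonneg (α := ℝ) (wordLength T lam)]
      have : (wordLength T lam : ℝ) ≤ (r : ℝ) := le_trans h1 hlam
      exact_mod_cast this
    have hlamcr : wordLength T lam ≤ c * r := le_trans hlamr (by nlinarith [hc1])
    obtain ⟨x, hx⟩ := he'surj (schart B j y' lam)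
    have hdyx : (A.graph i).dist y x ≤ r := by
      have h1 := (hdistf y x).2
      rw [hx, ← hy'def] at h1
      have h2 : (B.graph j).dist y' (schart B j y' lam) = wordLength T lam := by
        have := hdistB 1 lam (by rw [wordLength_one]; omega) hlamcr
        rw [inv_one, one_mul, schart_one B hy'] at this
        exact this
      rw [h2] at h1
      have : ((A.graph i).dist y x : ℝ) ≤ (r : ℝ) := le_trans h1 hlam
      exact_mod_cast this
    obtain ⟨p, hp⟩ := (hconnA i y x).exists_walk_length_eq_dist
    obtain ⟨u, hu, hxu⟩ := schart_walk_rev hSsymm hSgen A hy hFA p 1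
      (schart_one A hy).symm (by rw [wordLength_one, hp]; omega)
    rw [one_mul] at hxu
    have hur : wordLength S u ≤ r := by rw [hp] at hu; omega
    obtain ⟨hbu, hsu⟩ := hqspec u hur
    refine ⟨u, hur, hinjB (q u) lam hbu hlamcr ?_⟩
    rw [← hsu, ← hxu, hx]

end Key

lemma ultra_pigeon {α : Type v} (U : Ultrafilter ℕ) (v : ℕ → α) (s : Set α)
    (hs : s.Finite) (hv : v ⁻¹' s ∈ U) : ∃ a : α, {r : ℕ | v r = a} ∈ U := by
  have hmem : s ∈ U.map v := by
    rw [Ultrafilter.mem_map]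
    exact hv
  obtain ⟨a, -, ha⟩ := Ultrafilter.eq_pure_of_finite_mem hs hmem
  refine ⟨a, ?_⟩
  have h2 : {a} ∈ U.map v := by rw [ha]; exact rfl
  rw [Ultrafilter.mem_map] at h2
  have heq : {r : ℕ | v r = a} = v ⁻¹' {a} := by ext r; simp
  rwa [heq]

open SoficApprox in
theorem bilipschitz_of_bilipschitz_equivalence'
    {Γ : Type u} [Group Γ] {S : Finset Γ}
    {Λ : Type u} [Group Λ] {T : Finset Λ}
    (hSsymm : ∀ s ∈ S, s⁻¹ ∈ S) (hSgen : Subgroup.closure (S : Set Γ) = ⊤)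
    (hTsymm : ∀ t ∈ T, t⁻¹ ∈ T) (hTgen : Subgroup.closure (T : Set Λ) = ⊤)
    (A : SoficApprox Γ S) (B : SoficApprox Λ T)
    (hconnA : ∀ i, (A.graph i).Connected) (hconnB : ∀ i, (B.graph i).Connected)
    (dX : A.Total → A.Total → ℝ) (hdX : A.Admissible dX)
    (dX' : B.Total → B.Total → ℝ) (hdX' : B.Admissible dX')
    (f : A.Total → B.Total) (hfbij : Function.Bijective f)
    (C₀ : ℝ) (hC₀ : 1 ≤ C₀)
    (hbilip : ∀ p q : A.Total,
      (1 / C₀) * dX p q ≤ dX' (f p) (f q) ∧ dX' (f p) (f q) ≤ C₀ * dX p q) :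
    ∃ (F : Γ → Λ) (C : ℝ), Function.Bijective F ∧ 1 ≤ C ∧
      ∀ g h : Γ,
        (1 / C) * (wordLength S (g⁻¹ * h) : ℝ) ≤ (wordLength T ((F g)⁻¹ * F h) : ℝ) ∧
        (wordLength T ((F g)⁻¹ * F h) : ℝ) ≤ C * (wordLength S (g⁻¹ * h) : ℝ) := by
  classical
  have hC₀pos : (0 : ℝ) < C₀ := lt_of_lt_of_le one_pos hC₀
  have key := fun r : ℕ => key_approx hSsymm hSgen hTsymm hTgen A B hconnA hconnB
    dX hdX dX' hdX' f hfbij C₀ hC₀ hbilip r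
  set q : ℕ → Γ → Λ := fun r => Classical.choose (key r) with hqdef
  have hq1 : ∀ r, q r 1 = 1 := fun r => (Classical.choose_spec (key r)).1
  have hq2 : ∀ r (g h : Γ), wordLength S g ≤ r → wordLength S h ≤ r →
      (wordLength S (g⁻¹ * h) : ℝ) ≤ C₀ * (wordLength T ((q r g)⁻¹ * q r h) : ℝ) ∧
      (wordLength T ((q r g)⁻¹ * q r h) : ℝ) ≤ C₀ * (wordLength S (g⁻¹ * h) : ℝ) :=
    fun r => (Classical.choose_spec (key r)).2.1
  have hq3 : ∀ (r : ℕ) (lam : Λ), C₀ * (wordLength T lam : ℝ) ≤ (r : ℝ) →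
      ∃ g : Γ, wordLength S g ≤ r ∧ q r g = lam :=
    fun r => (Classical.choose_spec (key r)).2.2
  obtain ⟨U, hU⟩ := Ultrafilter.exists_le (Filter.cofinite : Filter ℕ)
  have hUcof : ∀ s : Set ℕ, sᶜ.Finite → s ∈ U := fun s hs => hU hs
  have htail : ∀ n : ℕ, {r : ℕ | n ≤ r} ∈ U := by
    intro n
    refine hUcof _ ?_
    have : {r : ℕ | n ≤ r}ᶜ = Set.Iio n := by ext r; simp [Set.mem_Iio]
    rw [this]
    exact Set.finite_Iio n
  set c : ℕ := ⌈C₀⌉₊ with hcdef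
  have hCc : C₀ ≤ (c : ℝ) := Nat.le_ceil C₀
  -- the word length of `q r g` is bounded for large `r`
  have hqbound : ∀ (g : Γ) (r : ℕ), wordLength S g ≤ r →
      wordLength T (q r g) ≤ c * wordLength S g := by
    intro g r hg
    have h2 := (hq2 r 1 g (by rw [wordLength_one]; omega) hg).2
    rw [hq1 r, inv_one, one_mul, inv_one, one_mul] at h2
    have : (wordLength T (q r g) : ℝ) ≤ ((c * wordLength S g : ℕ) : ℝ) := by
      push_cast
      calc (wordLength T (q r g) : ℝ) ≤ C₀ * (wordLength S g : ℝ) := h2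
        _ ≤ (c : ℝ) * (wordLength S g : ℝ) :=
          mul_le_mul_of_nonneg_right hCc (Nat.cast_nonneg _)
    exact_mod_cast this
  -- stabilize the values along the ultrafilter
  have hstab : ∀ g : Γ, ∃ lam : Λ, {r : ℕ | q r g = lam} ∈ U := by
    intro g
    refine ultra_pigeon U (fun r => q r g) (↑(wordBall T (c * wordLength S g))) 
      (Finset.finite_toSet _) ?_
    refine Filter.mem_of_superset (htail (wordLength S g)) ?_
    intro r hr
    simp only [Set.mem_preimage, Finset.mem_coe, mem_wordBall hTsymm hTgen]
    exact hqbound g r hr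
  set F : Γ → Λ := fun g => Classical.choose (hstab g) with hFdef
  have hF : ∀ g : Γ, {r : ℕ | q r g = F g} ∈ U := fun g => Classical.choose_spec (hstab g)
  -- the bilipschitz bounds for F
  have hbound : ∀ g h : Γ,
      (wordLength S (g⁻¹ * h) : ℝ) ≤ C₀ * (wordLength T ((F g)⁻¹ * F h) : ℝ) ∧
      (wordLength T ((F g)⁻¹ * F h) : ℝ) ≤ C₀ * (wordLength S (g⁻¹ * h) : ℝ) := by
    intro g h
    have hmem : ({r : ℕ | q r g = F g} ∩ {r : ℕ | q r h = F h} ∩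
        {r : ℕ | max (wordLength S g) (wordLength S h) ≤ r}) ∈ U :=
      Filter.inter_mem (Filter.inter_mem (hF g) (hF h)) (htail _)
    obtain ⟨r, hr⟩ := Ultrafilter.nonempty_of_mem hmem
    obtain ⟨⟨hrg, hrh⟩, hrr⟩ := hr
    have := hq2 r g h (le_trans (le_max_left _ _) hrr) (le_trans (le_max_right _ _) hrr)
    rw [hrg, hrh] at this
    exact this
  have hinj : Function.Injective F := by
    intro g h hgh
    have h1 := (hbound g h).1
    rw [hgh, inv_mul_cancel] at h1
    rw [wordLength_one] at h1
    norm_num at h1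
    have := eq_one_of_wordLength_eq_zero hSsymm hSgen h1
    rw [inv_mul_eq_one] at this
    exact this
  have hsurjF : Function.Surjective F := by
    intro lam
    set R : ℕ := ⌈C₀ * (wordLength T lam : ℝ)⌉₊ with hRdef
    have hRle : C₀ * (wordLength T lam : ℝ) ≤ (R : ℝ) := Nat.le_ceil _
    -- for large r there is a g of length ≤ R with q r g = lam
    have hw : ∀ r : ℕ, R ≤ r → ∃ g : Γ, wordLength S g ≤ R ∧ q r g = lam := by
      intro r hr
      have hrR : (R : ℝ) ≤ (r : ℝ) := by exact_mod_cast hr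
      obtain ⟨g, hg, hqg⟩ := hq3 r lam (le_trans hRle hrR)
      refine ⟨g, ?_, hqg⟩
      have h1 := (hq2 r 1 g (by rw [wordLength_one]; omega) hg).1
      rw [hq1 r, inv_one, one_mul, inv_one, one_mul, hqg] at h1
      have : (wordLength S g : ℝ) ≤ (R : ℝ) := le_trans h1 hRle
      exact_mod_cast this
    set w : ℕ → Γ := fun r => if hx : ∃ g : Γ, wordLength S g ≤ R ∧ q r g = lam
      then Classical.choose hx else 1 with hwdef
    have hwspec : ∀ r : ℕ, R ≤ r → wordLength S (w r) ≤ R ∧ q r (w r) = lam := by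
      intro r hr
      have hx : ∃ g : Γ, wordLength S g ≤ R ∧ q r g = lam := hw r hr
      have : w r = Classical.choose hx := dif_pos hx
      rw [this]
      exact Classical.choose_spec hx
    obtain ⟨g₀, hg₀⟩ := ultra_pigeon U w (↑(wordBall S R)) (Finset.finite_toSet _)
      (Filter.mem_of_superset (htail R) (by
        intro r hr
        simp only [Set.mem_preimage, Finset.mem_coe, mem_wordBall hSsymm hSgen]
        exact (hwspec r hr).1))
    have hmem : ({r : ℕ | w r = g₀} ∩ {r : ℕ | q r g₀ = F g₀} ∩ {r : ℕ | R ≤ r}) ∈ U :=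
      Filter.inter_mem (Filter.inter_mem hg₀ (hF g₀)) (htail R)
    obtain ⟨r, ⟨⟨hr1, hr2⟩, hr3⟩⟩ := Ultrafilter.nonempty_of_mem hmem
    refine ⟨g₀, ?_⟩
    rw [← hr2, ← hr1]
    exact (hwspec r hr3).2
  refine ⟨F, C₀, ⟨hinj, hsurjF⟩, hC₀, ?_⟩
  intro g h
  obtain ⟨h1, h2⟩ := hbound g h
  constructor
  · rw [div_mul_eq_mul_div, one_mul, div_le_iff₀ hC₀pos]
    linarith
  · exact h2

open SoficApprox in
/-- **Bilipschitz equivalent sofic approximations give bilipschitz equivalent groups.**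
If the spaces of graphs of sofic approximations of `Γ = ⟨S⟩` and `Λ = ⟨T⟩` (with connected
approximating graphs and admissible metrics) are bilipschitz equivalent, then `Γ` and `Λ`
are bilipschitz equivalent. -/
theorem bilipschitz_of_bilipschitz_equivalence
    {Γ : Type u} [Group Γ] {S : Finset Γ}
    {Λ : Type u} [Group Λ] {T : Finset Λ}
    (hSsymm : ∀ s ∈ S, s⁻¹ ∈ S) (hSgen : Subgroup.closure (S : Set Γ) = ⊤)
    (hTsymm : ∀ t ∈ T, t⁻¹ ∈ T) (hTgen : Subgroup.closure (T : Set Λ) = ⊤)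
    (A : SoficApprox Γ S) (B : SoficApprox Λ T)
    (hconnA : ∀ i, (A.graph i).Connected) (hconnB : ∀ i, (B.graph i).Connected)
    (dX : A.Total → A.Total → ℝ) (hdX : A.Admissible dX)
    (dX' : B.Total → B.Total → ℝ) (hdX' : B.Admissible dX')
    (f : A.Total → B.Total) (hfbij : Function.Bijective f)
    (C₀ : ℝ) (hC₀ : 1 ≤ C₀)
    (hbilip : ∀ p q : A.Total,
      (1 / C₀) * dX p q ≤ dX' (f p) (f q) ∧ dX' (f p) (f q) ≤ C₀ * dX p q) :
    ∃ (F : Γ → Λ) (C : ℝ), Function.Bijective F ∧ 1 ≤ C ∧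
      ∀ g h : Γ,
        (1 / C) * (wordLength S (g⁻¹ * h) : ℝ) ≤ (wordLength T ((F g)⁻¹ * F h) : ℝ) ∧
        (wordLength T ((F g)⁻¹ * F h) : ℝ) ≤ C * (wordLength S (g⁻¹ * h) : ℝ) :=
  bilipschitz_of_bilipschitz_equivalence' hSsymm hSgen hTsymm hTgen A B hconnA hconnB
    dX hdX dX' hdX' f hfbij C₀ hC₀ hbilip
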